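/- Let c ≥ 1, let G₁ and G₂ be groups, and let π₁ : F₁ → G₁, π₂ : F₂ → G₂ and π : F → G₁ × G₂ be surjective group homomorphisms from free groups, with kernels R₁, R₂ and R respectively. Then there is a group isomorphism (R ∩ γ_{c+1}(F))/⟨T_{c+1}(F) ∩ R⟩ ≅ (R₁ ∩ γ_{c+1}(F₁))/⟨T_{c+1}(F₁) ∩ R₁⟩ × (R₂ ∩ γ_{c+1}(F₂))/⟨T_{c+1}(F₂) ∩ R₂⟩; that is, the c-nilpotent B̃₀-invariant of G₁ × G₂ is the direct product of the c-nilpotent B̃₀-invariants of G₁ and G₂. -/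

import Mathlib

open Subgroup
open scoped commutatorElement

/-- `Tset G c` is the set `T_{c+1}(G)` of left-normed commutators of weight `c+1` in `G`:
`Tset G 0 = G` (weight-one "commutators", i.e. all elements), and
`Tset G (n+1) = {⁅a, g⁆ | a ∈ Tset G n, g ∈ G}`. -/
def Tset (G : Type*) [Group G] : ℕ → Set G
  | 0 => Set.univ
  | n + 1 => {x | ∃ a ∈ Tset G n, ∃ g : G, x = ⁅a, g⁆}

theorem Tset_conj {G : Type*} [Group G] (n : ℕ) {x : G} (hx : x ∈ Tset G n) (g : G) :
    g * x * g⁻¹ ∈ Tset G n := by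
  induction n generalizing x with
  | zero => trivial
  | succ n ih =>
      obtain ⟨a, ha, b, rfl⟩ := hx
      exact ⟨g * a * g⁻¹, ih ha, g * b * g⁻¹, conjugate_commutatorElement a b g⟩

/-- `Tcl c S = ⟨T_{c+1}(G) ∩ S⟩`, the subgroup generated by the left-normed commutators of
weight `c+1` lying in `S`. -/
def Tcl {G : Type*} [Group G] (c : ℕ) (S : Subgroup G) : Subgroup G :=
  Subgroup.closure (Tset G c ∩ (S : Set G))

instance Tcl_normal {G : Type*} [Group G] (c : ℕ) (S : Subgroup G) [hS : S.Normal] :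
    (Tcl c S).Normal := by
  constructor
  intro n hn g
  induction hn using Subgroup.closure_induction with
  | mem x hx =>
      exact Subgroup.subset_closure ⟨Tset_conj c hx.1 g, hS.conj_mem x hx.2 g⟩
  | one => simpa using (Tcl c S).one_mem
  | mul x y _ _ hx hy =>
      have h : g * (x * y) * g⁻¹ = (g * x * g⁻¹) * (g * y * g⁻¹) := by group
      rw [h]; exact mul_mem hx hy
  | inv x _ hx =>
      have h : g * x⁻¹ * g⁻¹ = (g * x * g⁻¹)⁻¹ := by group
      rw [h]; exact inv_mem hx

theorem Tset_subset_lcs {G : Type*} [Group G] (n : ℕ) :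
    Tset G n ⊆ (((⊤ : Subgroup G).lowerCentralSeries n : Subgroup G) : Set G) := by
  induction n with
  | zero => intro x _; simp [Subgroup.lowerCentralSeries_zero]
  | succ n ih =>
      rintro x ⟨a, ha, b, rfl⟩
      rw [Subgroup.lowerCentralSeries_succ]
      exact Subgroup.commutator_mem_commutator (ih ha) (Subgroup.mem_top b)

theorem Tcl_le {G : Type*} [Group G] (c : ℕ) (S : Subgroup G) : Tcl c S ≤ S :=
  (Subgroup.closure_le S).2 Set.inter_subset_right

theorem Tcl_le_lcs {G : Type*} [Group G] (c : ℕ) (S : Subgroup G) :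
    Tcl c S ≤ (⊤ : Subgroup G).lowerCentralSeries c :=
  (Subgroup.closure_le _).2 fun _ hx => Tset_subset_lcs c hx.1

theorem Tcl_mono {G : Type*} [Group G] (c : ℕ) {R K : Subgroup G} (h : R ≤ K) :
    Tcl c R ≤ Tcl c K :=
  Subgroup.closure_mono (Set.inter_subset_inter_right _ h)

theorem subgroupOf_le_comap_inclusion {F : Type*} [Group F] {A B H₁ H₂ : Subgroup F}
    (hH : H₁ ≤ H₂) (hAB : A ≤ B) :
    A.subgroupOf H₁ ≤ (B.subgroupOf H₂).comap (Subgroup.inclusion hH) := by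
  intro x hx
  rw [Subgroup.mem_comap, Subgroup.mem_subgroupOf, Subgroup.coe_inclusion]
  exact hAB (Subgroup.mem_subgroupOf.mp hx)
section Helpers

variable {F G H : Type*} [Group F] [Group G] [Group H]

theorem Tset_map (θ : F →* G) (n : ℕ) {x : F} (hx : x ∈ Tset F n) : θ x ∈ Tset G n := by
  induction n generalizing x with
  | zero => trivial
  | succ n ih =>
      obtain ⟨a, ha, b, rfl⟩ := hx
      exact ⟨θ a, ih ha, θ b, map_commutatorElement θ a b⟩

theorem mem_of_normal_left {S : Subgroup F} [hS : S.Normal] {s : F} (hs : s ∈ S) (g : F) :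
    ⁅s, g⁆ ∈ S := by
  have : s * (g * s⁻¹ * g⁻¹) ∈ S := S.mul_mem hs (hS.conj_mem s⁻¹ (inv_mem hs) g)
  simpa [commutatorElement_def, mul_assoc] using this

theorem mem_of_normal_right {S : Subgroup F} [hS : S.Normal] {s : F} (hs : s ∈ S) (g : F) :
    ⁅g, s⁆ ∈ S := by
  rw [← commutatorElement_inv, inv_mem_iff]; exact mem_of_normal_left hs g

theorem comm_mem_iff_mk (N : Subgroup G) [N.Normal] (y cEl : G) :
    ⁅y, cEl⁆ ∈ N ↔
      (QuotientGroup.mk' N) y ∈ Subgroup.centralizer {(QuotientGroup.mk' N) cEl} := by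
  rw [Subgroup.mem_centralizer_singleton_iff, ← commutatorElement_eq_one_iff_mul_comm,
      ← map_commutatorElement, ← MonoidHom.mem_ker, QuotientGroup.ker_mk']

theorem comm_mem_iff_mk' (N : Subgroup G) [N.Normal] (y cEl : G) :
    ⁅cEl, y⁆ ∈ N ↔
      (QuotientGroup.mk' N) y ∈ Subgroup.centralizer {(QuotientGroup.mk' N) cEl} := by
  rw [← comm_mem_iff_mk, ← commutatorElement_inv, inv_mem_iff]

/-- The closure/centralizer trick: to show `⁅θ x, c⁆ ∈ N` for `x` in a closure, it suffices
to check it on generators. -/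
theorem closure_comm_map (θ : F →* G) (N : Subgroup G) [N.Normal] (cEl : G) (S : Set F)
    (h : ∀ s ∈ S, ⁅θ s, cEl⁆ ∈ N) {x : F} (hx : x ∈ Subgroup.closure S) :
    ⁅θ x, cEl⁆ ∈ N := by
  rw [comm_mem_iff_mk]
  have key : Subgroup.closure S ≤
      (Subgroup.centralizer {(QuotientGroup.mk' N) cEl}).comap
        ((QuotientGroup.mk' N).comp θ) := by
    refine (Subgroup.closure_le _).2 (fun s hs => ?_)
    simpa [Subgroup.mem_comap] using (comm_mem_iff_mk N (θ s) cEl).1 (h s hs)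
  exact key hx

theorem closure_comm_map' (θ : F →* G) (N : Subgroup G) [N.Normal] (cEl : G) (S : Set F)
    (h : ∀ s ∈ S, ⁅θ s, cEl⁆ ∈ N) {x : F} (hx : x ∈ Subgroup.closure S) :
    ⁅cEl, θ x⁆ ∈ N := by
  rw [← commutatorElement_inv, inv_mem_iff]
  exact closure_comm_map θ N cEl S h hx

theorem Tcl_zero (S : Subgroup F) : Tcl 0 S = S := by
  unfold Tcl
  rw [show Tset F 0 ∩ (S : Set F) = (S : Set F) by simp [Tset]]
  exact Subgroup.closure_eq S

theorem lcs_succ_le {n : ℕ} {K : Subgroup F}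
    (h : ∀ p ∈ (⊤ : Subgroup F).lowerCentralSeries n, ∀ q : F, ⁅p, q⁆ ∈ K) :
    (⊤ : Subgroup F).lowerCentralSeries (n + 1) ≤ K := by
  rw [Subgroup.lowerCentralSeries_succ]
  refine (Subgroup.closure_le _).2 ?_
  rintro x ⟨p, hp, q, -, rfl⟩
  exact h p hp q

theorem mem_lcs_succ {n : ℕ} {p : F} (hp : p ∈ (⊤ : Subgroup F).lowerCentralSeries n) (q : F) :
    ⁅p, q⁆ ∈ (⊤ : Subgroup F).lowerCentralSeries (n + 1) := by
  rw [Subgroup.lowerCentralSeries_succ]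
  exact Subgroup.subset_closure ⟨p, hp, q, Subgroup.mem_top q, rfl⟩

/-- γ_{n+1} is contained in the subgroup generated by weight n+1 left-normed commutators. -/
theorem mem_Tcl_of (c : ℕ) (S : Subgroup F) {x : F} (h1 : x ∈ Tset F c) (h2 : x ∈ S) :
    x ∈ Tcl c S :=
  Subgroup.subset_closure ⟨h1, h2⟩

theorem Tset_succ_mem {n : ℕ} {a : F} (ha : a ∈ Tset F n) (g : F) : ⁅a, g⁆ ∈ Tset F (n + 1) :=
  ⟨a, ha, g, rfl⟩

theorem lcs_le_Tcl_top (n : ℕ) : (⊤ : Subgroup F).lowerCentralSeries n ≤ Tcl n (⊤ : Subgroup F) := by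
  induction n with
  | zero => exact le_top.trans_eq (Tcl_zero ⊤).symm
  | succ n ih =>
      refine lcs_succ_le (fun p hp q => ?_)
      exact closure_comm_map (MonoidHom.id F) (Tcl (n+1) (⊤ : Subgroup F)) q _
        (fun s hs => mem_Tcl_of _ _ (Tset_succ_mem hs.1 q) trivial) (ih hp)

/-- Commutators of `γ_{i+1}` with elements of a normal subgroup `S` lie in `Tcl (i+1) S`. -/
theorem comm_lcs_mem_Tcl {S : Subgroup F} [S.Normal] {i : ℕ} {x r : F}
    (hx : x ∈ (⊤ : Subgroup F).lowerCentralSeries i) (hr : r ∈ S) : ⁅x, r⁆ ∈ Tcl (i + 1) S := by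
  refine closure_comm_map (MonoidHom.id F) (Tcl (i+1) S) r (Tset F i ∩ ((⊤:Subgroup F) : Set F))
    (fun s hs => mem_Tcl_of _ _ (Tset_succ_mem hs.1 r) (mem_of_normal_right hr s)) ?_
  exact lcs_le_Tcl_top i hx

theorem comm_lcs_mem_Tcl' {S : Subgroup F} [S.Normal] {i : ℕ} {x r : F}
    (hx : x ∈ (⊤ : Subgroup F).lowerCentralSeries i) (hr : r ∈ S) : ⁅r, x⁆ ∈ Tcl (i + 1) S := by
  rw [← commutatorElement_inv, inv_mem_iff]
  exact comm_lcs_mem_Tcl hx hr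

/-- Commutators of `Tcl i S` with anything lie in `Tcl (i+1) S`. -/
theorem Tcl_comm_mem {S : Subgroup F} [S.Normal] {i : ℕ} {x : F}
    (hx : x ∈ Tcl i S) (g : F) : ⁅x, g⁆ ∈ Tcl (i + 1) S :=
  closure_comm_map (MonoidHom.id F) (Tcl (i+1) S) g (Tset F i ∩ (S : Set F))
    (fun s hs => mem_Tcl_of _ _ (Tset_succ_mem hs.1 g) (mem_of_normal_left hs.2 g)) hx

end Helpers
section Computation

variable {Q : Type*} [Group Q]

theorem comm_mul_central {δ : Q} (hδ : ∀ z : Q, Commute δ z) (u w : Q) :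
    ⁅u * δ, w⁆ = ⁅u, w⁆ := by
  have h1 : δ * (w * δ⁻¹) = w * δ⁻¹ * δ := (hδ _).eq
  rw [commutatorElement_def, commutatorElement_def, mul_inv_rev]
  calc u * δ * w * (δ⁻¹ * u⁻¹) * w⁻¹
      = u * (δ * (w * δ⁻¹)) * u⁻¹ * w⁻¹ := by simp [mul_assoc]
    _ = u * (w * δ⁻¹ * δ) * u⁻¹ * w⁻¹ := by rw [h1]
    _ = u * w * u⁻¹ * w⁻¹ := by simp [mul_assoc]

theorem comm_mul_commute {σ u : Q} (hσ : Commute σ u) (v : Q) :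
    ⁅u, v * σ⁆ = ⁅u, v⁆ := by
  have h1 : σ * u⁻¹ = u⁻¹ * σ := (hσ.inv_right).eq
  rw [commutatorElement_def, commutatorElement_def, mul_inv_rev]
  calc u * (v * σ) * u⁻¹ * (σ⁻¹ * v⁻¹)
      = u * v * (σ * u⁻¹) * σ⁻¹ * v⁻¹ := by simp [mul_assoc]
    _ = u * v * (u⁻¹ * σ) * σ⁻¹ * v⁻¹ := by rw [h1]
    _ = u * v * u⁻¹ * v⁻¹ := by simp [mul_assoc]

theorem comm_mul_mul {δ σ u v : Q} (hδ : ∀ z : Q, Commute δ z) (hσ : Commute σ u) :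
    ⁅u * δ, v * σ⁆ = ⁅u, v⁆ := by
  rw [comm_mul_central hδ, comm_mul_commute hσ]

end Computation

section MkHelpers

variable {G : Type*} [Group G]

theorem commute_mk_of_mem {N : Subgroup G} [N.Normal] {x y : G} (h : ⁅x, y⁆ ∈ N) :
    Commute ((QuotientGroup.mk' N) x) ((QuotientGroup.mk' N) y) := by
  rw [← commutatorElement_eq_one_iff_commute, ← map_commutatorElement]
  exact (QuotientGroup.eq_one_iff _).mpr h

theorem central_mk_of_forall {N : Subgroup G} [N.Normal] {x : G} (h : ∀ g : G, ⁅x, g⁆ ∈ N) :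
    ∀ z : G ⧸ N, Commute ((QuotientGroup.mk' N) x) z := by
  intro z
  obtain ⟨g, rfl⟩ := QuotientGroup.mk'_surjective N z
  exact commute_mk_of_mem (h g)

theorem mk_eq_mk_iff_mem {N : Subgroup G} [N.Normal] (x y : G) :
    (QuotientGroup.mk' N) x = (QuotientGroup.mk' N) y ↔ x⁻¹ * y ∈ N := by
  exact QuotientGroup.eq

theorem mul_inv_mem_iff_mk {N : Subgroup G} [hN : N.Normal] (u v : G) :
    u * v⁻¹ ∈ N ↔ (QuotientGroup.mk' N) v = (QuotientGroup.mk' N) u := by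
  rw [mk_eq_mk_iff_mem]
  constructor
  · intro h
    have := hN.conj_mem _ h v⁻¹
    simpa [mul_assoc] using this
  · intro h
    have := hN.conj_mem _ h v
    simpa [mul_assoc] using this

end MkHelpers

section TwoLift

variable {F G : Type*} [Group F] [Group G]

/-- Two homomorphisms that agree modulo a normal subgroup `R'` agree on `γ_{i+1}`
modulo `Tcl i R'`. -/
theorem lift_congr (φ ψ : F →* G) (R' : Subgroup G) [R'.Normal]
    (h : ∀ x, (ψ x)⁻¹ * φ x ∈ R') :
    ∀ i, ∀ x ∈ (⊤ : Subgroup F).lowerCentralSeries i, (ψ x)⁻¹ * φ x ∈ Tcl i R' := by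
  intro i
  induction i with
  | zero => intro x _; rw [Tcl_zero]; exact h x
  | succ i ih =>
      set N := Tcl (i + 1) R' with hN
      have key : (⊤ : Subgroup F).lowerCentralSeries (i + 1) ≤
          MonoidHom.eqLocus ((QuotientGroup.mk' N).comp ψ) ((QuotientGroup.mk' N).comp φ) := by
        refine lcs_succ_le (fun a ha g => ?_)
        show (QuotientGroup.mk' N) (ψ ⁅a, g⁆) = (QuotientGroup.mk' N) (φ ⁅a, g⁆)
        have hφa : φ a = ψ a * ((ψ a)⁻¹ * φ a) := by simp [mul_assoc]
        have hφg : φ g = ψ g * ((ψ g)⁻¹ * φ g) := by simp [mul_assoc]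
        rw [map_commutatorElement, map_commutatorElement, map_commutatorElement,
          map_commutatorElement, hφa, hφg, map_mul, map_mul]
        refine (comm_mul_mul (Q := G ⧸ N) (δ := (QuotientGroup.mk' N) ((ψ a)⁻¹ * φ a))
          (σ := (QuotientGroup.mk' N) ((ψ g)⁻¹ * φ g)) ?_ ?_).symm
        · exact central_mk_of_forall (fun z => Tcl_comm_mem (ih a ha) z)
        · refine commute_mk_of_mem ?_
          have hψa : ψ a ∈ (⊤ : Subgroup G).lowerCentralSeries i :=
            Subgroup.lowerCentralSeries.map ψ i ⟨a, ha, rfl⟩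
          exact comm_lcs_mem_Tcl' hψa (h g)
      intro x hx
      have := key hx
      rw [MonoidHom.eqLocus] at this
      exact (mk_eq_mk_iff_mem (ψ x) (φ x)).mp this
  
end TwoLift
section InvHom

open QuotientGroup

variable (c : ℕ)

/-- The `c`-nilpotent `B̃₀`-invariant quotient associated to a normal subgroup `R` of `F`. -/
abbrev invQ {F : Type*} [Group F] (R : Subgroup F) :=
  ↥(R ⊓ (⊤ : Subgroup F).lowerCentralSeries c) ⧸ (Tcl c R).subgroupOf (R ⊓ (⊤ : Subgroup F).lowerCentralSeries c)

variable {F G H : Type*} [Group F] [Group G] [Group H]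

theorem Tcl_map (θ : F →* G) {R : Subgroup F} {R' : Subgroup G}
    (hR : ∀ x ∈ R, θ x ∈ R') {x : F} (hx : x ∈ Tcl c R) : θ x ∈ Tcl c R' := by
  have key : Tcl c R ≤ (Tcl c R').comap θ :=
    (Subgroup.closure_le _).2 (fun s hs =>
      mem_Tcl_of c R' (Tset_map θ c hs.1) (hR s hs.2))
  exact key hx

/-- The restriction of `θ` to the relevant subgroups. -/
def resHom (θ : F →* G) {R : Subgroup F} {R' : Subgroup G} (hR : ∀ x ∈ R, θ x ∈ R') :
    ↥(R ⊓ (⊤ : Subgroup F).lowerCentralSeries c) →* ↥(R' ⊓ (⊤ : Subgroup G).lowerCentralSeries c) :=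
  MonoidHom.codRestrict (θ.comp (R ⊓ (⊤ : Subgroup F).lowerCentralSeries c).subtype) _
    (fun x => Subgroup.mem_inf.mpr
      ⟨hR _ (Subgroup.mem_inf.mp x.2).1,
       Subgroup.lowerCentralSeries.map θ c ⟨x.1, (Subgroup.mem_inf.mp x.2).2, rfl⟩⟩)

theorem resHom_coe (θ : F →* G) {R : Subgroup F} {R' : Subgroup G} (hR : ∀ x ∈ R, θ x ∈ R')
    (x : ↥(R ⊓ (⊤ : Subgroup F).lowerCentralSeries c)) : ((resHom c θ hR x : ↥(R' ⊓ (⊤ : Subgroup G).lowerCentralSeries c)) : G) = θ x.1 := rfl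

/-- The induced homomorphism on invariants. -/
def invHom (θ : F →* G) {R : Subgroup F} {R' : Subgroup G} [R.Normal] [R'.Normal]
    (hR : ∀ x ∈ R, θ x ∈ R') : invQ c R →* invQ c R' :=
  QuotientGroup.lift _ ((QuotientGroup.mk' _).comp (resHom c θ hR))
    (fun x hx => by
      rw [MonoidHom.mem_ker, MonoidHom.comp_apply, mk'_apply, QuotientGroup.eq_one_iff]
      rw [Subgroup.mem_subgroupOf]
      exact Tcl_map c θ hR (Subgroup.mem_subgroupOf.mp hx))

theorem invHom_mk (θ : F →* G) {R : Subgroup F} {R' : Subgroup G} [R.Normal] [R'.Normal]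
    (hR : ∀ x ∈ R, θ x ∈ R') (x : ↥(R ⊓ (⊤ : Subgroup F).lowerCentralSeries c)) :
    invHom c θ hR (QuotientGroup.mk x) = QuotientGroup.mk (resHom c θ hR x) := rfl

theorem invHom_congr {θ₁ θ₂ : F →* G} {R : Subgroup F} {R' : Subgroup G} [R.Normal] [R'.Normal]
    {hR1 : ∀ x ∈ R, θ₁ x ∈ R'} {hR2 : ∀ x ∈ R, θ₂ x ∈ R'}
    (h : ∀ x ∈ (⊤ : Subgroup F).lowerCentralSeries c, (θ₂ x)⁻¹ * θ₁ x ∈ Tcl c R')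
    (z : invQ c R) : invHom c θ₁ hR1 z = invHom c θ₂ hR2 z := by
  induction z using QuotientGroup.induction_on with
  | H x =>
      rw [invHom_mk, invHom_mk]
      rw [QuotientGroup.eq]
      rw [Subgroup.mem_subgroupOf]
      show (θ₁ x.1)⁻¹ * θ₂ x.1 ∈ Tcl c R'
      have := h x.1 (Subgroup.mem_inf.mp x.2).2
      simpa using inv_mem this

theorem invHom_comp (θ : F →* G) (θ' : G →* H) {R : Subgroup F} {R' : Subgroup G}
    {R'' : Subgroup H} [R.Normal] [R'.Normal] [R''.Normal]
    (hR : ∀ x ∈ R, θ x ∈ R') (hR' : ∀ x ∈ R', θ' x ∈ R'') (z : invQ c R) :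
    invHom c θ' hR' (invHom c θ hR z) =
      invHom c (θ'.comp θ) (fun x hx => hR' _ (hR x hx)) z := by
  induction z using QuotientGroup.induction_on with
  | H x => rfl

theorem invHom_id {R : Subgroup F} [R.Normal] (z : invQ c R) :
    invHom c (MonoidHom.id F) (fun _ h => h) z = z := by
  induction z using QuotientGroup.induction_on with
  | H x => exact congrArg _ (Subtype.ext rfl)

end InvHom
section Invariance

variable (c : ℕ)

/-- A lift of a presentation `π` through a surjection `π'`. -/
noncomputable def liftHom {α : Type*} {G' : Type*} [Group G'] {Gp : Type*} [Group Gp]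
    (π : FreeGroup α →* Gp) (π' : G' →* Gp) (hπ' : Function.Surjective π') :
    FreeGroup α →* G' :=
  FreeGroup.lift (fun a => Function.surjInv hπ' (π (FreeGroup.of a)))

theorem liftHom_spec {α : Type*} {G' : Type*} [Group G'] {Gp : Type*} [Group Gp]
    (π : FreeGroup α →* Gp) (π' : G' →* Gp) (hπ' : Function.Surjective π') (x : FreeGroup α) :
    π' (liftHom π π' hπ' x) = π x := by
  have : π'.comp (liftHom π π' hπ' ) = π := by
    refine FreeGroup.ext_hom _ _ (fun a => ?_)
    simp [liftHom, Function.surjInv_eq hπ']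
  exact DFunLike.congr_fun this x

theorem liftHom_ker {α : Type*} {G' : Type*} [Group G'] {Gp : Type*} [Group Gp]
    (π : FreeGroup α →* Gp) (π' : G' →* Gp) (hπ' : Function.Surjective π') :
    ∀ x ∈ π.ker, liftHom π π' hπ' x ∈ π'.ker := by
  intro x hx
  rw [MonoidHom.mem_ker, liftHom_spec]
  exact hx

/-- One direction of roundtrip: a self-lift of a presentation induces the identity. -/
theorem invHom_self_lift {α : Type*} {Gp : Type*} [Group Gp] (π : FreeGroup α →* Gp)
    (θ : FreeGroup α →* FreeGroup α) (hθ : ∀ x, π (θ x) = π x)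
    (hk : ∀ x ∈ π.ker, θ x ∈ π.ker) (z : invQ c π.ker) :
    invHom c θ hk z = z := by
  have h := invHom_congr c (θ₁ := θ) (θ₂ := MonoidHom.id _) (hR1 := hk)
    (hR2 := fun _ h => h)
    (fun x hx => lift_congr θ (MonoidHom.id _) π.ker
      (fun y => by rw [MonoidHom.mem_ker]; simp [hθ y]) c x hx) z
  rw [h, invHom_id]

/-- Independence of the invariant from the chosen free presentation. -/
noncomputable def invEquivOfPresentations {α β : Type*} {Gp : Type*} [Group Gp]
    (π : FreeGroup α →* Gp) (hπ : Function.Surjective π)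
    (π' : FreeGroup β →* Gp) (hπ' : Function.Surjective π') :
    invQ c π.ker ≃* invQ c π'.ker := by
  refine MonoidHom.toMulEquiv
    (invHom c (liftHom π π' hπ') (liftHom_ker π π' hπ'))
    (invHom c (liftHom π' π hπ) (liftHom_ker π' π hπ))
    (MonoidHom.ext (fun z => ?_)) (MonoidHom.ext (fun z => ?_))
  · show invHom c (liftHom π' π hπ) _ (invHom c (liftHom π π' hπ') _ z) = z
    rw [invHom_comp]
    exact invHom_self_lift c π _
      (fun x => by rw [MonoidHom.comp_apply, liftHom_spec, liftHom_spec]) _ z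
  · show invHom c (liftHom π π' hπ') _ (invHom c (liftHom π' π hπ) _ z) = z
    rw [invHom_comp]
    exact invHom_self_lift c π' _
      (fun x => by rw [MonoidHom.comp_apply, liftHom_spec, liftHom_spec]) _ z

end Invariance
section ProdComputation

variable {Q : Type*} [Group Q]

theorem comm_core {A₁ A₂ B₁ B₂ : Q}
    (h21 : Commute A₂ B₁) (h12 : Commute A₁ B₂)
    (hYA : Commute ⁅A₂, B₂⁆ A₁) (hYB : Commute ⁅A₂, B₂⁆ B₁) :
    ⁅A₁ * A₂, B₁ * B₂⁆ = ⁅A₁, B₁⁆ * ⁅A₂, B₂⁆ := by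
  have s1 : ∀ z : Q, A₂ * (B₁ * z) = B₁ * (A₂ * z) := fun z => by
    rw [← mul_assoc, h21.eq, mul_assoc]
  have s2 : ∀ z : Q, A₁⁻¹ * (B₂⁻¹ * z) = B₂⁻¹ * (A₁⁻¹ * z) := fun z => by
    rw [← mul_assoc, (h12.inv_left.inv_right).eq, mul_assoc]
  have e5 : ∀ z : Q, A₂ * (B₂ * (A₂⁻¹ * (B₂⁻¹ * z))) = ⁅A₂, B₂⁆ * z := fun z => by
    simp [commutatorElement_def, mul_assoc]
  have s3 : ∀ z : Q, ⁅A₂, B₂⁆ * (A₁⁻¹ * z) = A₁⁻¹ * (⁅A₂, B₂⁆ * z) := fun z => by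
    rw [← mul_assoc, hYA.inv_right.eq, mul_assoc]
  have s4 : ⁅A₂, B₂⁆ * B₁⁻¹ = B₁⁻¹ * ⁅A₂, B₂⁆ := hYB.inv_right.eq
  calc ⁅A₁ * A₂, B₁ * B₂⁆
      = A₁ * (A₂ * (B₁ * (B₂ * (A₂⁻¹ * (A₁⁻¹ * (B₂⁻¹ * B₁⁻¹)))))) := by
        simp [commutatorElement_def, mul_assoc, mul_inv_rev]
    _ = A₁ * (B₁ * (A₂ * (B₂ * (A₂⁻¹ * (A₁⁻¹ * (B₂⁻¹ * B₁⁻¹)))))) := by rw [s1]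
    _ = A₁ * (B₁ * (A₂ * (B₂ * (A₂⁻¹ * (B₂⁻¹ * (A₁⁻¹ * B₁⁻¹)))))) := by rw [s2]
    _ = A₁ * (B₁ * (⁅A₂, B₂⁆ * (A₁⁻¹ * B₁⁻¹))) := by rw [e5]
    _ = A₁ * (B₁ * (A₁⁻¹ * (⁅A₂, B₂⁆ * B₁⁻¹))) := by rw [s3]
    _ = A₁ * (B₁ * (A₁⁻¹ * (B₁⁻¹ * ⁅A₂, B₂⁆))) := by rw [s4]
    _ = ⁅A₁, B₁⁆ * ⁅A₂, B₂⁆ := by simp [commutatorElement_def, mul_assoc]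

theorem comm_conj_left {ε u : Q} (hεu : Commute ε u) (w : Q) :
    ⁅u, ε * w⁆ = ε * ⁅u, w⁆ * ε⁻¹ := by
  have su : ∀ z : Q, u * (ε * z) = ε * (u * z) := fun z => by
    rw [← mul_assoc, hεu.symm.eq, mul_assoc]
  calc ⁅u, ε * w⁆
      = u * (ε * (w * (u⁻¹ * (w⁻¹ * ε⁻¹)))) := by
        simp [commutatorElement_def, mul_assoc, mul_inv_rev]
    _ = ε * (u * (w * (u⁻¹ * (w⁻¹ * ε⁻¹)))) := by rw [su]
    _ = ε * ⁅u, w⁆ * ε⁻¹ := by simp [commutatorElement_def, mul_assoc]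

theorem comm_prod_eq {A₁ A₂ B₁ B₂ δ ε : Q}
    (hδ : ∀ z : Q, Commute δ z)
    (hε1 : Commute ε A₁) (hε2 : Commute ε A₂)
    (hεc : Commute ε (⁅A₁, B₁⁆ * ⁅A₂, B₂⁆))
    (h21 : Commute A₂ B₁) (h12 : Commute A₁ B₂)
    (hYA : Commute ⁅A₂, B₂⁆ A₁) (hYB : Commute ⁅A₂, B₂⁆ B₁) :
    ⁅δ * (A₁ * A₂), ε * (B₁ * B₂)⁆ = ⁅A₁, B₁⁆ * ⁅A₂, B₂⁆ := by
  have h1 : δ * (A₁ * A₂) = (A₁ * A₂) * δ := (hδ _).eq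
  rw [h1, comm_mul_central hδ, comm_conj_left (hε1.mul_right hε2),
    comm_core h21 h12 hYA hYB, hεc.eq]
  simp [mul_assoc]

end ProdComputation

section ClaimA

variable {F : Type*} [Group F] (θ₁ θ₂ : F →* F) (D : Subgroup F) [D.Normal]
variable (hD : ∀ x, θ₁ x * θ₂ x * x⁻¹ ∈ D) (hcr : ∀ x y, ⁅θ₁ x, θ₂ y⁆ ∈ D)

include hcr in
theorem crossX₁ {i : ℕ} {x : F} (hx : x ∈ (⊤ : Subgroup F).lowerCentralSeries i) (g : F) :
    ⁅θ₂ x, θ₁ g⁆ ∈ Tcl (i + 1) D := by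
  refine closure_comm_map θ₂ (Tcl (i+1) D) (θ₁ g) (Tset F i ∩ ((⊤ : Subgroup F) : Set F))
    (fun s hs => mem_Tcl_of _ _ (Tset_succ_mem (Tset_map θ₂ i hs.1) (θ₁ g))
      (by rw [← commutatorElement_inv, inv_mem_iff]; exact hcr g s)) ?_
  exact lcs_le_Tcl_top i hx

include hcr in
theorem crossX₂ {i : ℕ} {x : F} (hx : x ∈ (⊤ : Subgroup F).lowerCentralSeries i) (g : F) :
    ⁅θ₁ g, θ₂ x⁆ ∈ Tcl (i + 1) D := by
  rw [← commutatorElement_inv, inv_mem_iff]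
  exact crossX₁ θ₁ θ₂ D hcr hx g

include hcr in
theorem crossX₃ {i : ℕ} {x : F} (hx : x ∈ (⊤ : Subgroup F).lowerCentralSeries i) (g : F) :
    ⁅θ₁ x, θ₂ g⁆ ∈ Tcl (i + 1) D := by
  refine closure_comm_map θ₁ (Tcl (i+1) D) (θ₂ g) (Tset F i ∩ ((⊤ : Subgroup F) : Set F))
    (fun s hs => mem_Tcl_of _ _ (Tset_succ_mem (Tset_map θ₁ i hs.1) (θ₂ g))
      (hcr s g)) ?_
  exact lcs_le_Tcl_top i hx

include hcr in
theorem crossX₄ {i : ℕ} {x : F} (hx : x ∈ (⊤ : Subgroup F).lowerCentralSeries i) (g : F) :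
    ⁅θ₂ g, θ₁ x⁆ ∈ Tcl (i + 1) D := by
  rw [← commutatorElement_inv, inv_mem_iff]
  exact crossX₃ θ₁ θ₂ D hcr hx g

end ClaimA
section ClaimAMain

variable {F : Type*} [Group F] (θ₁ θ₂ : F →* F) (D : Subgroup F) [D.Normal]
variable (hD : ∀ x, θ₁ x * θ₂ x * x⁻¹ ∈ D) (hcr : ∀ x y, ⁅θ₁ x, θ₂ y⁆ ∈ D)

include hD hcr in
/-- Main decomposition lemma: on `γ_{i+1}`, `x ≡ θ₁ x · θ₂ x` modulo `Tcl i D`. -/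
theorem claimA : ∀ i : ℕ, ∀ x ∈ (⊤ : Subgroup F).lowerCentralSeries i, θ₁ x * θ₂ x * x⁻¹ ∈ Tcl i D := by
  intro i
  induction i with
  | zero => intro x _; rw [Tcl_zero]; exact hD x
  | succ i ih =>
      have hle : (⊤ : Subgroup F).lowerCentralSeries (i + 1) ≤ (⊤ : Subgroup F).lowerCentralSeries i :=
        Subgroup.lowerCentralSeries_antitone (S := ⊤) (Nat.le_succ i)
      let H : Subgroup F :=
        { carrier := {x | x ∈ (⊤ : Subgroup F).lowerCentralSeries (i + 1) ∧
            θ₁ x * θ₂ x * x⁻¹ ∈ Tcl (i + 1) D}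
          one_mem' := ⟨one_mem _, by simpa using one_mem (Tcl (i + 1) D)⟩
          mul_mem' := by
            rintro x y ⟨hx1, hx2⟩ ⟨hy1, hy2⟩
            refine ⟨mul_mem hx1 hy1, ?_⟩
            have hid : θ₁ (x * y) * θ₂ (x * y) * (x * y)⁻¹ =
                (θ₁ x * ⁅θ₁ y, θ₂ x⁆ * (θ₁ x)⁻¹) * ((θ₁ x * θ₂ x * x⁻¹) *
                  (x * (θ₁ y * θ₂ y * y⁻¹) * x⁻¹)) := by
              rw [map_mul, map_mul, commutatorElement_def]
              group
            rw [hid]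
            refine mul_mem ((Tcl_normal _ _).conj_mem _ ?_ _)
              (mul_mem hx2 ((Tcl_normal _ _).conj_mem _ hy2 _))
            exact crossX₂ θ₁ θ₂ D hcr (hle hx1) y
          inv_mem' := by
            rintro x ⟨hx1, hx2⟩
            refine ⟨inv_mem hx1, ?_⟩
            have hid : θ₁ x⁻¹ * θ₂ x⁻¹ * (x⁻¹)⁻¹ =
                ⁅θ₁ x⁻¹, θ₂ x⁻¹⁆ * (x⁻¹ * (θ₁ x * θ₂ x * x⁻¹)⁻¹ * (x⁻¹)⁻¹) := by
              rw [map_inv, map_inv, commutatorElement_def]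
              group
            rw [hid]
            refine mul_mem ?_ ((Tcl_normal _ _).conj_mem _ (inv_mem hx2) _)
            have h3 := crossX₃ θ₁ θ₂ D hcr
              (inv_mem (hle hx1) : x⁻¹ ∈ (⊤ : Subgroup F).lowerCentralSeries i) x⁻¹
            simpa using h3 }
      have key : (⊤ : Subgroup F).lowerCentralSeries (i + 1) ≤ H := by
        refine lcs_succ_le (fun a ha g => ?_)
        refine ⟨mem_lcs_succ ha g, ?_⟩
        set N := Tcl (i + 1) D with hNdef
        set q := QuotientGroup.mk' N with hqdef
        rw [mul_inv_mem_iff_mk]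
        -- goal : q ⁅a, g⁆ = q (θ₁ ⁅a, g⁆ * θ₂ ⁅a, g⁆)
        have hmemθ₁a : θ₁ a ∈ (⊤ : Subgroup F).lowerCentralSeries i :=
          Subgroup.lowerCentralSeries.map θ₁ i ⟨a, ha, rfl⟩
        have hmemθ₂a : θ₂ a ∈ (⊤ : Subgroup F).lowerCentralSeries i :=
          Subgroup.lowerCentralSeries.map θ₂ i ⟨a, ha, rfl⟩
        have hcm : ⁅a, g⁆ ∈ (⊤ : Subgroup F).lowerCentralSeries i := hle (mem_lcs_succ ha g)
        have hmemθ₁c : θ₁ ⁅a, g⁆ ∈ (⊤ : Subgroup F).lowerCentralSeries i :=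
          Subgroup.lowerCentralSeries.map θ₁ i ⟨_, hcm, rfl⟩
        have hmemθ₂c : θ₂ ⁅a, g⁆ ∈ (⊤ : Subgroup F).lowerCentralSeries i :=
          Subgroup.lowerCentralSeries.map θ₂ i ⟨_, hcm, rfl⟩
        have qa : q a = q ((θ₁ a * θ₂ a * a⁻¹)⁻¹) * (q (θ₁ a) * q (θ₂ a)) := by
          rw [← map_mul, ← map_mul]
          exact congrArg q (by group)
        have qg : q g = q ((θ₁ g * θ₂ g * g⁻¹)⁻¹) * (q (θ₁ g) * q (θ₂ g)) := by
          rw [← map_mul, ← map_mul]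
          exact congrArg q (by group)
        have hb1 : ⁅q (θ₁ a), q (θ₁ g)⁆ = q (θ₁ ⁅a, g⁆) := by
          rw [map_commutatorElement, map_commutatorElement]
        have hb2 : ⁅q (θ₂ a), q (θ₂ g)⁆ = q (θ₂ ⁅a, g⁆) := by
          rw [map_commutatorElement, map_commutatorElement]
        have hδ : ∀ z, Commute (q ((θ₁ a * θ₂ a * a⁻¹)⁻¹)) z :=
          central_mk_of_forall (fun y => Tcl_comm_mem (inv_mem (ih a ha)) y)
        have hε1 : Commute (q ((θ₁ g * θ₂ g * g⁻¹)⁻¹)) (q (θ₁ a)) :=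
          commute_mk_of_mem (comm_lcs_mem_Tcl' hmemθ₁a (inv_mem (hD g)))
        have hε2 : Commute (q ((θ₁ g * θ₂ g * g⁻¹)⁻¹)) (q (θ₂ a)) :=
          commute_mk_of_mem (comm_lcs_mem_Tcl' hmemθ₂a (inv_mem (hD g)))
        have hεc : Commute (q ((θ₁ g * θ₂ g * g⁻¹)⁻¹))
            (⁅q (θ₁ a), q (θ₁ g)⁆ * ⁅q (θ₂ a), q (θ₂ g)⁆) := by
          rw [hb1, hb2]
          exact Commute.mul_right
            (commute_mk_of_mem (comm_lcs_mem_Tcl' hmemθ₁c (inv_mem (hD g))))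
            (commute_mk_of_mem (comm_lcs_mem_Tcl' hmemθ₂c (inv_mem (hD g))))
        have h21 : Commute (q (θ₂ a)) (q (θ₁ g)) :=
          commute_mk_of_mem (crossX₁ θ₁ θ₂ D hcr ha g)
        have h12 : Commute (q (θ₁ a)) (q (θ₂ g)) :=
          commute_mk_of_mem (crossX₃ θ₁ θ₂ D hcr ha g)
        have hYA : Commute (⁅q (θ₂ a), q (θ₂ g)⁆) (q (θ₁ a)) := by
          rw [hb2]
          exact commute_mk_of_mem (crossX₁ θ₁ θ₂ D hcr hcm a)
        have hYB : Commute (⁅q (θ₂ a), q (θ₂ g)⁆) (q (θ₁ g)) := by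
          rw [hb2]
          exact commute_mk_of_mem (crossX₁ θ₁ θ₂ D hcr hcm g)
        calc q ⁅a, g⁆ = ⁅q a, q g⁆ := map_commutatorElement q a g
          _ = ⁅q ((θ₁ a * θ₂ a * a⁻¹)⁻¹) * (q (θ₁ a) * q (θ₂ a)),
              q ((θ₁ g * θ₂ g * g⁻¹)⁻¹) * (q (θ₁ g) * q (θ₂ g))⁆ := by rw [← qa, ← qg]
          _ = ⁅q (θ₁ a), q (θ₁ g)⁆ * ⁅q (θ₂ a), q (θ₂ g)⁆ :=
              comm_prod_eq hδ hε1 hε2 hεc h21 h12 hYA hYB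
          _ = q (θ₁ ⁅a, g⁆ * θ₂ ⁅a, g⁆) := by rw [hb1, hb2, map_mul]
      exact fun x hx => (key hx).2

end ClaimAMain
section ProductSetup

variable {α₁ α₂ : Type*}

/-- Inclusion of the first free factor. -/
def pIota₁ : FreeGroup α₁ →* FreeGroup (α₁ ⊕ α₂) :=
  FreeGroup.lift (fun a => FreeGroup.of (Sum.inl a))

/-- Inclusion of the second free factor. -/
def pIota₂ : FreeGroup α₂ →* FreeGroup (α₁ ⊕ α₂) :=
  FreeGroup.lift (fun a => FreeGroup.of (Sum.inr a))

/-- Retraction onto the first free factor. -/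
def pRho₁ : FreeGroup (α₁ ⊕ α₂) →* FreeGroup α₁ :=
  FreeGroup.lift (Sum.elim FreeGroup.of (fun _ => 1))

/-- Retraction onto the second free factor. -/
def pRho₂ : FreeGroup (α₁ ⊕ α₂) →* FreeGroup α₂ :=
  FreeGroup.lift (Sum.elim (fun _ => 1) FreeGroup.of)

/-- First idempotent endomorphism of the free product. -/
def pTheta₁ : FreeGroup (α₁ ⊕ α₂) →* FreeGroup (α₁ ⊕ α₂) := pIota₁.comp pRho₁

/-- Second idempotent endomorphism of the free product. -/
def pTheta₂ : FreeGroup (α₁ ⊕ α₂) →* FreeGroup (α₁ ⊕ α₂) := pIota₂.comp pRho₂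

theorem pRho₁_iota₁ (x : FreeGroup α₁) : pRho₁ (pIota₁ (α₂ := α₂) x) = x := by
  have : ((pRho₁ (α₁ := α₁) (α₂ := α₂)).comp pIota₁) = MonoidHom.id _ :=
    FreeGroup.ext_hom _ _ (fun a => by simp [pRho₁, pIota₁])
  exact DFunLike.congr_fun this x

theorem pRho₂_iota₂ (x : FreeGroup α₂) : pRho₂ (pIota₂ (α₁ := α₁) x) = x := by
  have : ((pRho₂ (α₁ := α₁) (α₂ := α₂)).comp pIota₂) = MonoidHom.id _ :=
    FreeGroup.ext_hom _ _ (fun a => by simp [pRho₂, pIota₂])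
  exact DFunLike.congr_fun this x

theorem pRho₁_iota₂ (x : FreeGroup α₂) : pRho₁ (pIota₂ (α₁ := α₁) x) = 1 := by
  have : ((pRho₁ (α₁ := α₁) (α₂ := α₂)).comp pIota₂) = 1 :=
    FreeGroup.ext_hom _ _ (fun a => by simp [pRho₁, pIota₂])
  exact DFunLike.congr_fun this x

theorem pRho₂_iota₁ (x : FreeGroup α₁) : pRho₂ (pIota₁ (α₂ := α₂) x) = 1 := by
  have : ((pRho₂ (α₁ := α₁) (α₂ := α₂)).comp pIota₁) = 1 :=
    FreeGroup.ext_hom _ _ (fun a => by simp [pRho₂, pIota₁])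
  exact DFunLike.congr_fun this x

theorem pRho₁_theta₁ (x : FreeGroup (α₁ ⊕ α₂)) : pRho₁ (pTheta₁ x) = pRho₁ x :=
  pRho₁_iota₁ _

theorem pRho₁_theta₂ (x : FreeGroup (α₁ ⊕ α₂)) : pRho₁ (pTheta₂ x) = 1 :=
  pRho₁_iota₂ _

theorem pRho₂_theta₂ (x : FreeGroup (α₁ ⊕ α₂)) : pRho₂ (pTheta₂ x) = pRho₂ x :=
  pRho₂_iota₂ _

theorem pRho₂_theta₁ (x : FreeGroup (α₁ ⊕ α₂)) : pRho₂ (pTheta₁ x) = 1 :=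
  pRho₂_iota₁ _

/-- The intersection of the kernels of the two retractions. -/
def pD : Subgroup (FreeGroup (α₁ ⊕ α₂)) :=
  (pRho₁ (α₂ := α₂)).ker ⊓ (pRho₂ (α₁ := α₁)).ker

instance pD_normal : (pD (α₁ := α₁) (α₂ := α₂)).Normal :=
  Subgroup.normal_inf_normal _ _

theorem phD : ∀ x : FreeGroup (α₁ ⊕ α₂), pTheta₁ x * pTheta₂ x * x⁻¹ ∈ pD := by
  intro x
  refine Subgroup.mem_inf.mpr ⟨?_, ?_⟩ <;>
    simp [MonoidHom.mem_ker, pRho₁_theta₁, pRho₁_theta₂, pRho₂_theta₁, pRho₂_theta₂]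

theorem phcr : ∀ x y : FreeGroup (α₁ ⊕ α₂), ⁅pTheta₁ x, pTheta₂ y⁆ ∈ pD := by
  intro x y
  refine Subgroup.mem_inf.mpr ⟨?_, ?_⟩ <;>
    simp [MonoidHom.mem_ker, map_commutatorElement, pRho₁_theta₁, pRho₁_theta₂,
      pRho₂_theta₁, pRho₂_theta₂]

theorem pTheta₁_iota₁ (x : FreeGroup α₁) : pTheta₁ (pIota₁ (α₂ := α₂) x) = pIota₁ x :=
  congrArg pIota₁ (pRho₁_iota₁ x)

theorem pTheta₂_iota₂ (x : FreeGroup α₂) : pTheta₂ (pIota₂ (α₁ := α₁) x) = pIota₂ x :=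
  congrArg pIota₂ (pRho₂_iota₂ x)

variable {G₁ G₂ : Type*} [Group G₁] [Group G₂]

/-- The product presentation of `G₁ × G₂`. -/
def pPi (π₁ : FreeGroup α₁ →* G₁) (π₂ : FreeGroup α₂ →* G₂) :
    FreeGroup (α₁ ⊕ α₂) →* G₁ × G₂ :=
  (π₁.comp pRho₁).prod (π₂.comp pRho₂)

theorem pPi_surjective (π₁ : FreeGroup α₁ →* G₁) (hπ₁ : Function.Surjective π₁)
    (π₂ : FreeGroup α₂ →* G₂) (hπ₂ : Function.Surjective π₂) :
    Function.Surjective (pPi π₁ π₂) := by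
  rintro ⟨g₁, g₂⟩
  obtain ⟨u, hu⟩ := hπ₁ g₁
  obtain ⟨w, hw⟩ := hπ₂ g₂
  refine ⟨pIota₁ u * pIota₂ w, ?_⟩
  have : pPi π₁ π₂ (pIota₁ u * pIota₂ w) =
      (π₁ (pRho₁ (pIota₁ u * pIota₂ w)), π₂ (pRho₂ (pIota₁ u * pIota₂ w))) := rfl
  rw [this]
  simp [map_mul, pRho₁_iota₁, pRho₁_iota₂, pRho₂_iota₁, pRho₂_iota₂, hu, hw]

theorem pD_le_ker (π₁ : FreeGroup α₁ →* G₁) (π₂ : FreeGroup α₂ →* G₂) :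
    pD ≤ (pPi π₁ π₂).ker := by
  intro x hx
  obtain ⟨h1, h2⟩ := Subgroup.mem_inf.mp hx
  rw [MonoidHom.mem_ker] at h1 h2 ⊢
  have : pPi π₁ π₂ x = (π₁ (pRho₁ x), π₂ (pRho₂ x)) := rfl
  rw [this, h1, h2]
  simp

theorem ker_iota₁ (π₁ : FreeGroup α₁ →* G₁) (π₂ : FreeGroup α₂ →* G₂) :
    ∀ x ∈ π₁.ker, pIota₁ x ∈ (pPi π₁ π₂).ker := by
  intro x hx
  rw [MonoidHom.mem_ker] at hx ⊢
  have : pPi π₁ π₂ (pIota₁ x) = (π₁ (pRho₁ (pIota₁ x)), π₂ (pRho₂ (pIota₁ x))) := rfl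
  rw [this, pRho₁_iota₁, pRho₂_iota₁, hx]
  simp

theorem ker_iota₂ (π₁ : FreeGroup α₁ →* G₁) (π₂ : FreeGroup α₂ →* G₂) :
    ∀ x ∈ π₂.ker, pIota₂ x ∈ (pPi π₁ π₂).ker := by
  intro x hx
  rw [MonoidHom.mem_ker] at hx ⊢
  have : pPi π₁ π₂ (pIota₂ x) = (π₁ (pRho₁ (pIota₂ x)), π₂ (pRho₂ (pIota₂ x))) := rfl
  rw [this, pRho₁_iota₂, pRho₂_iota₂, hx]
  simp

theorem ker_rho₁ (π₁ : FreeGroup α₁ →* G₁) (π₂ : FreeGroup α₂ →* G₂) :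
    ∀ x ∈ (pPi π₁ π₂).ker, pRho₁ x ∈ π₁.ker := by
  intro x hx
  rw [MonoidHom.mem_ker] at hx ⊢
  have h : pPi π₁ π₂ x = (π₁ (pRho₁ x), π₂ (pRho₂ x)) := rfl
  rw [h] at hx
  exact congrArg Prod.fst hx

theorem ker_rho₂ (π₁ : FreeGroup α₁ →* G₁) (π₂ : FreeGroup α₂ →* G₂) :
    ∀ x ∈ (pPi π₁ π₂).ker, pRho₂ x ∈ π₂.ker := by
  intro x hx
  rw [MonoidHom.mem_ker] at hx ⊢
  have h : pPi π₁ π₂ x = (π₁ (pRho₁ x), π₂ (pRho₂ x)) := rfl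
  rw [h] at hx
  exact congrArg Prod.snd hx

end ProductSetup
section TrivialHom

variable (c : ℕ) {F G : Type*} [Group F] [Group G]

theorem invHom_of_eq_one (θ : F →* G) {R : Subgroup F} {R' : Subgroup G}
    [R.Normal] [R'.Normal] (hθ : ∀ x, θ x = 1) (hR : ∀ x ∈ R, θ x ∈ R')
    (z : invQ c R) : invHom c θ hR z = 1 := by
  induction z using QuotientGroup.induction_on with
  | H x =>
      rw [invHom_mk]
      refine (QuotientGroup.eq_one_iff _).mpr ?_
      rw [Subgroup.mem_subgroupOf]
      show θ x.1 ∈ Tcl c R'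
      rw [hθ]
      exact one_mem _

end TrivialHom

section ProductEquiv

variable (c : ℕ) {α₁ α₂ : Type*} {G₁ G₂ : Type*} [Group G₁] [Group G₂]
variable (π₁ : FreeGroup α₁ →* G₁) (π₂ : FreeGroup α₂ →* G₂)

theorem pJ_commute (hc : 1 ≤ c) :
    ∀ (m : invQ c π₁.ker) (n : invQ c π₂.ker),
      Commute (invHom c pIota₁ (ker_iota₁ π₁ π₂) m)
        (invHom c pIota₂ (ker_iota₂ π₁ π₂) n) := by
  obtain ⟨c', rfl⟩ : ∃ c', c = c' + 1 :=
    ⟨c - 1, by omega⟩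
  intro m n
  induction m using QuotientGroup.induction_on with
  | H x =>
      induction n using QuotientGroup.induction_on with
      | H y =>
          rw [invHom_mk, invHom_mk]
          apply commute_mk_of_mem (N := (Tcl (c'+1) (pPi π₁ π₂).ker).subgroupOf _)
          rw [Subgroup.mem_subgroupOf]
          have hcoe : ((⁅resHom (c'+1) (pIota₁ (α₂ := α₂)) (ker_iota₁ π₁ π₂) x,
              resHom (c'+1) (pIota₂ (α₁ := α₁)) (ker_iota₂ π₁ π₂) y⁆ :
              ↥((pPi π₁ π₂).ker ⊓ (⊤ : Subgroup (FreeGroup (α₁ ⊕ α₂))).lowerCentralSeries (c'+1))) :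
              FreeGroup (α₁ ⊕ α₂)) = ⁅pIota₁ (α₂ := α₂) x.1, pIota₂ (α₁ := α₁) y.1⁆ := by
            rw [commutatorElement_def, Subgroup.coe_mul, Subgroup.coe_mul, Subgroup.coe_mul,
              Subgroup.coe_inv, Subgroup.coe_inv, resHom_coe, resHom_coe]
            simp [commutatorElement_def, resHom_coe]
          rw [hcoe]
          apply Tcl_mono _ (pD_le_ker π₁ π₂)
          rw [← pTheta₁_iota₁ x.1, ← pTheta₂_iota₂ y.1]
          refine crossX₂ pTheta₁ pTheta₂ pD phcr ?_ (pIota₁ x.1)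
          refine Subgroup.lowerCentralSeries_antitone (S := ⊤) (Nat.le_succ c') ?_
          exact Subgroup.lowerCentralSeries.map pIota₂ (c' + 1)
            ⟨y.1, (Subgroup.mem_inf.mp y.2).2, rfl⟩

/-- The combined map into the invariant of the product presentation. -/
noncomputable def pJ (hc : 1 ≤ c) :
    invQ c π₁.ker × invQ c π₂.ker →* invQ c (pPi π₁ π₂).ker :=
  MonoidHom.noncommCoprod (invHom c pIota₁ (ker_iota₁ π₁ π₂))
    (invHom c pIota₂ (ker_iota₂ π₁ π₂)) (pJ_commute c π₁ π₂ hc)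

/-- The projection map from the invariant of the product presentation. -/
noncomputable def pP :
    invQ c (pPi π₁ π₂).ker →* invQ c π₁.ker × invQ c π₂.ker :=
  (invHom c pRho₁ (ker_rho₁ π₁ π₂)).prod (invHom c pRho₂ (ker_rho₂ π₁ π₂))

theorem pP_pJ (hc : 1 ≤ c) :
    (pP c π₁ π₂).comp (pJ c π₁ π₂ hc) = MonoidHom.id _ := by
  refine MonoidHom.ext (fun z => ?_)
  obtain ⟨m, n⟩ := z
  have hJ : pJ c π₁ π₂ hc (m, n) =
      invHom c pIota₁ (ker_iota₁ π₁ π₂) m * invHom c pIota₂ (ker_iota₂ π₁ π₂) n := rfl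
  have e11 : invHom c pRho₁ (ker_rho₁ π₁ π₂) (invHom c pIota₁ (ker_iota₁ π₁ π₂) m) = m := by
    rw [invHom_comp]
    have := invHom_congr c (θ₁ := pRho₁.comp pIota₁) (θ₂ := MonoidHom.id _)
      (hR1 := fun x hx => ker_rho₁ π₁ π₂ _ (ker_iota₁ π₁ π₂ x hx))
      (hR2 := fun _ h => h)
      (fun x _ => by
        show ((MonoidHom.id _) x)⁻¹ * (pRho₁.comp pIota₁) x ∈ Tcl c π₁.ker
        rw [MonoidHom.id_apply, MonoidHom.comp_apply, pRho₁_iota₁]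
        simpa using one_mem (Tcl c π₁.ker)) m
    rw [this, invHom_id]
  have e22 : invHom c pRho₂ (ker_rho₂ π₁ π₂) (invHom c pIota₂ (ker_iota₂ π₁ π₂) n) = n := by
    rw [invHom_comp]
    have := invHom_congr c (θ₁ := pRho₂.comp pIota₂) (θ₂ := MonoidHom.id _)
      (hR1 := fun x hx => ker_rho₂ π₁ π₂ _ (ker_iota₂ π₁ π₂ x hx))
      (hR2 := fun _ h => h)
      (fun x _ => by
        show ((MonoidHom.id _) x)⁻¹ * (pRho₂.comp pIota₂) x ∈ Tcl c π₂.ker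
        rw [MonoidHom.id_apply, MonoidHom.comp_apply, pRho₂_iota₂]
        simpa using one_mem (Tcl c π₂.ker)) n
    rw [this, invHom_id]
  have e12 : invHom c pRho₁ (ker_rho₁ π₁ π₂) (invHom c pIota₂ (ker_iota₂ π₁ π₂) n) = 1 := by
    rw [invHom_comp]
    exact invHom_of_eq_one c _ (fun x => by
      rw [MonoidHom.comp_apply, pRho₁_iota₂]) _ n
  have e21 : invHom c pRho₂ (ker_rho₂ π₁ π₂) (invHom c pIota₁ (ker_iota₁ π₁ π₂) m) = 1 := by
    rw [invHom_comp]
    exact invHom_of_eq_one c _ (fun x => by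
      rw [MonoidHom.comp_apply, pRho₂_iota₁]) _ m
  show pP c π₁ π₂ (pJ c π₁ π₂ hc (m, n)) = (m, n)
  rw [hJ]
  have : pP c π₁ π₂ (invHom c pIota₁ (ker_iota₁ π₁ π₂) m *
      invHom c pIota₂ (ker_iota₂ π₁ π₂) n) =
      (invHom c pRho₁ (ker_rho₁ π₁ π₂) (invHom c pIota₁ (ker_iota₁ π₁ π₂) m) *
        invHom c pRho₁ (ker_rho₁ π₁ π₂) (invHom c pIota₂ (ker_iota₂ π₁ π₂) n),
       invHom c pRho₂ (ker_rho₂ π₁ π₂) (invHom c pIota₁ (ker_iota₁ π₁ π₂) m) *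
        invHom c pRho₂ (ker_rho₂ π₁ π₂) (invHom c pIota₂ (ker_iota₂ π₁ π₂) n)) := by
    simp [pP, MonoidHom.prod_apply, map_mul]
  rw [this, e11, e22, e12, e21]
  simp

theorem pJ_pP (hc : 1 ≤ c) :
    (pJ c π₁ π₂ hc).comp (pP c π₁ π₂) = MonoidHom.id _ := by
  refine MonoidHom.ext (fun z => ?_)
  induction z using QuotientGroup.induction_on with
  | H x =>
      show pJ c π₁ π₂ hc (pP c π₁ π₂ (QuotientGroup.mk x)) = QuotientGroup.mk x
      have hP : pP c π₁ π₂ (QuotientGroup.mk x) =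
          (QuotientGroup.mk (resHom c pRho₁ (ker_rho₁ π₁ π₂) x),
           QuotientGroup.mk (resHom c pRho₂ (ker_rho₂ π₁ π₂) x)) := rfl
      rw [hP]
      have hJ : pJ c π₁ π₂ hc
          (QuotientGroup.mk (resHom c pRho₁ (ker_rho₁ π₁ π₂) x),
           QuotientGroup.mk (resHom c pRho₂ (ker_rho₂ π₁ π₂) x)) =
          QuotientGroup.mk
            (resHom c pIota₁ (ker_iota₁ π₁ π₂) (resHom c pRho₁ (ker_rho₁ π₁ π₂) x) *
             resHom c pIota₂ (ker_iota₂ π₁ π₂) (resHom c pRho₂ (ker_rho₂ π₁ π₂) x)) := rfl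
      rw [hJ]
      rw [QuotientGroup.eq]
      rw [Subgroup.mem_subgroupOf]
      show (pTheta₁ x.1 * pTheta₂ x.1)⁻¹ * x.1 ∈ Tcl c (pPi π₁ π₂).ker
      have hd : pTheta₁ x.1 * pTheta₂ x.1 * x.1⁻¹ ∈ Tcl c pD :=
        claimA pTheta₁ pTheta₂ pD phD phcr c x.1 (Subgroup.mem_inf.mp x.2).2
      have hd' : pTheta₁ x.1 * pTheta₂ x.1 * x.1⁻¹ ∈ Tcl c (pPi π₁ π₂).ker :=
        Tcl_mono c (pD_le_ker π₁ π₂) hd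
      have hid : (pTheta₁ x.1 * pTheta₂ x.1)⁻¹ * x.1 =
          x.1⁻¹ * (pTheta₁ x.1 * pTheta₂ x.1 * x.1⁻¹)⁻¹ * (x.1⁻¹)⁻¹ := by group
      rw [hid]
      exact (Tcl_normal _ _).conj_mem _ (inv_mem hd') _

end ProductEquiv
/-- for `c ≥ 1`, the `c`-nilpotent `B̃₀`-invariant of `G₁ × G₂` is the direct
product of the `c`-nilpotent `B̃₀`-invariants of `G₁` and `G₂`; the invariant of `G` is
`(R ∩ γ_{c+1}(F))/⟨T_{c+1}(F) ∩ R⟩ = (R ⊓ (⊤ : Subgroup F).lowerCentralSeries c)/Tcl c R` for any free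
presentation `π : F ↠ G`, `R = ker π`. -/
theorem stmt11 (c : ℕ) (hc : 1 ≤ c) {G₁ G₂ : Type*} [Group G₁] [Group G₂] {α₁ α₂ α : Type*}
    (π₁ : FreeGroup α₁ →* G₁) (hπ₁ : Function.Surjective π₁)
    (π₂ : FreeGroup α₂ →* G₂) (hπ₂ : Function.Surjective π₂)
    (π : FreeGroup α →* G₁ × G₂) (hπ : Function.Surjective π) :
    Nonempty
      ((↥(π.ker ⊓ (⊤ : Subgroup (FreeGroup α)).lowerCentralSeries c) ⧸
          (Tcl c π.ker).subgroupOf (π.ker ⊓ (⊤ : Subgroup (FreeGroup α)).lowerCentralSeries c)) ≃*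
        (↥(π₁.ker ⊓ (⊤ : Subgroup (FreeGroup α₁)).lowerCentralSeries c) ⧸
            (Tcl c π₁.ker).subgroupOf (π₁.ker ⊓ (⊤ : Subgroup (FreeGroup α₁)).lowerCentralSeries c)) ×
          (↥(π₂.ker ⊓ (⊤ : Subgroup (FreeGroup α₂)).lowerCentralSeries c) ⧸
            (Tcl c π₂.ker).subgroupOf (π₂.ker ⊓ (⊤ : Subgroup (FreeGroup α₂)).lowerCentralSeries c))) := by
  have E₀ : invQ c π.ker ≃* invQ c (pPi π₁ π₂).ker :=
    invEquivOfPresentations c π hπ (pPi π₁ π₂) (pPi_surjective π₁ hπ₁ π₂ hπ₂)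
  have E₁ : invQ c (pPi π₁ π₂).ker ≃* invQ c π₁.ker × invQ c π₂.ker :=
    MonoidHom.toMulEquiv (pP c π₁ π₂) (pJ c π₁ π₂ hc)
      (pJ_pP c π₁ π₂ hc) (pP_pJ c π₁ π₂ hc)
  exact ⟨E₀.trans E₁⟩
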